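/- Let 𝒞 be a finite set of constructive ◇-free formulas and G = CK_□+𝒞, where CK_□ is LJ extended by the rule K_□. Suppose either every G-provable sequent is valid in the irreflexive node frame 𝒦ᵢ, or every G-provable sequent is valid in the reflexive node frame 𝒦ᵣ and G proves (⇒ □p → p). Then G has the Visser–Harrop property: whenever G proves Γ, {A_i → B_i}_{i∈I} ⇒ C ∨ D, where Γ is a finite multiset of Harrop ◇-free formulas and I is a finite (possibly empty) index set of ◇-free implications, then G proves Γ, {A_i → B_i}_{i∈I} ⇒ C, or Γ, {A_i → B_i}_{i∈I} ⇒ D, or Γ, {A_i → B_i}_{i∈I} ⇒ A_i for some i ∈ I. -/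

import Mathlib

set_option autoImplicit false

namespace UPT

/-- Modal formulas over atoms of type `α` (the language `ℒ = {∧,∨,→,⊤,⊥,□,◇}`). -/
inductive Fml (α : Type) : Type where
  | atom : α → Fml α
  | top  : Fml α
  | bot  : Fml α
  | and  : Fml α → Fml α → Fml α
  | or   : Fml α → Fml α → Fml α
  | imp  : Fml α → Fml α → Fml α
  | box  : Fml α → Fml α
  | dia  : Fml α → Fml α
deriving DecidableEq

variable {α β : Type}

/-- Simultaneous substitution of formulas for atoms. -/
def Fml.subst (σ : β → Fml α) : Fml β → Fml α
  | .atom b  => σ b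
  | .top     => .top
  | .bot     => .bot
  | .and A B => .and (A.subst σ) (B.subst σ)
  | .or A B  => .or (A.subst σ) (B.subst σ)
  | .imp A B => .imp (A.subst σ) (B.subst σ)
  | .box A   => .box (A.subst σ)
  | .dia A   => .dia (A.subst σ)

/-- A sequent: a finite multiset antecedent together with a succedent
containing at most one formula. -/
abbrev Seq (α : Type) : Type := Multiset (Fml α) × Option (Fml α)

/-- A rule set relates a (finite) list of premise sequents to a conclusion sequent. -/
abbrev RuleSet (α : Type) : Type := List (Seq α) → Seq α → Prop

/-- The axioms and rules of the single-conclusion sequent calculus `LJ`, stated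
schematically: they are closed under substituting arbitrary formulas for atoms
and arbitrary multisets (resp. succedents) for the context variables. -/
inductive LJRule : List (Seq α) → Seq α → Prop where
  | id (Γ : Multiset (Fml α)) (A : Fml α) : LJRule [] (A ::ₘ Γ, some A)
  | botL (Γ : Multiset (Fml α)) (Δ : Option (Fml α)) : LJRule [] (.bot ::ₘ Γ, Δ)
  | topR (Γ : Multiset (Fml α)) : LJRule [] (Γ, some .top)
  | wL (A : Fml α) (Γ : Multiset (Fml α)) (Δ : Option (Fml α)) :
      LJRule [(Γ, Δ)] (A ::ₘ Γ, Δ)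
  | wR (A : Fml α) (Γ : Multiset (Fml α)) : LJRule [(Γ, none)] (Γ, some A)
  | cL (A : Fml α) (Γ : Multiset (Fml α)) (Δ : Option (Fml α)) :
      LJRule [(A ::ₘ A ::ₘ Γ, Δ)] (A ::ₘ Γ, Δ)
  | cut (A : Fml α) (Γ : Multiset (Fml α)) (Δ : Option (Fml α)) :
      LJRule [(Γ, some A), (A ::ₘ Γ, Δ)] (Γ, Δ)
  | andL₁ (A B : Fml α) (Γ : Multiset (Fml α)) (Δ : Option (Fml α)) :
      LJRule [(A ::ₘ Γ, Δ)] (.and A B ::ₘ Γ, Δ)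
  | andL₂ (A B : Fml α) (Γ : Multiset (Fml α)) (Δ : Option (Fml α)) :
      LJRule [(B ::ₘ Γ, Δ)] (.and A B ::ₘ Γ, Δ)
  | andR (A B : Fml α) (Γ : Multiset (Fml α)) :
      LJRule [(Γ, some A), (Γ, some B)] (Γ, some (.and A B))
  | orL (A B : Fml α) (Γ : Multiset (Fml α)) (Δ : Option (Fml α)) :
      LJRule [(A ::ₘ Γ, Δ), (B ::ₘ Γ, Δ)] (.or A B ::ₘ Γ, Δ)
  | orR₁ (A B : Fml α) (Γ : Multiset (Fml α)) : LJRule [(Γ, some A)] (Γ, some (.or A B))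
  | orR₂ (A B : Fml α) (Γ : Multiset (Fml α)) : LJRule [(Γ, some B)] (Γ, some (.or A B))
  | impL (A B : Fml α) (Γ : Multiset (Fml α)) (Δ : Option (Fml α)) :
      LJRule [(Γ, some A), (B ::ₘ Γ, Δ)] (.imp A B ::ₘ Γ, Δ)
  | impR (A B : Fml α) (Γ : Multiset (Fml α)) :
      LJRule [(A ::ₘ Γ, some B)] (Γ, some (.imp A B))

/-- The rule `K_□`: from `Γ ⇒ A` infer `□Γ ⇒ □A`. -/
inductive KBoxRule : List (Seq α) → Seq α → Prop where
  | mk (Γ : Multiset (Fml α)) (A : Fml α) :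
      KBoxRule [(Γ, some A)] (Γ.map Fml.box, some (.box A))

/-- The rule `K_◇`: from `Γ, A ⇒ B` infer `□Γ, ◇A ⇒ ◇B`. -/
inductive KDiaRule : List (Seq α) → Seq α → Prop where
  | mk (Γ : Multiset (Fml α)) (A B : Fml α) :
      KDiaRule [(A ::ₘ Γ, some B)] (.dia A ::ₘ Γ.map Fml.box, some (.dia B))

/-- The rule `◇L`: from `Γ, A ⇒ B` infer `Γ, ◇A ⇒ ◇B`. -/
inductive DiaLRule : List (Seq α) → Seq α → Prop where
  | mk (Γ : Multiset (Fml α)) (A B : Fml α) :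
      DiaLRule [(A ::ₘ Γ, some B)] (.dia A ::ₘ Γ, some (.dia B))

/-- Adding a set `Ax` of axioms to a calculus: the initial sequents `⇒ σ(A)`
for every substitution instance `σ(A)` of every `A ∈ Ax`. -/
def axRule (Ax : Fml α → Prop) : RuleSet α := fun ps c =>
  ps = [] ∧ ∃ (A : Fml α) (σ : α → Fml α), Ax A ∧ c = ((0 : Multiset (Fml α)), some (A.subst σ))

/-- Using a set of sequents as additional initial sequents (assumptions). -/
def hypRule (H : Set (Seq α)) : RuleSet α := fun ps c => ps = [] ∧ c ∈ H

/-- The sequent calculus `LJ+Ax`. -/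
def LJSys (Ax : Fml α → Prop) : RuleSet α := fun ps c => LJRule ps c ∨ axRule Ax ps c

/-- The sequent calculus `CK+Ax = LJ + K_□ + K_◇ + Ax`. -/
def CKSys (Ax : Fml α → Prop) : RuleSet α := fun ps c =>
  LJRule ps c ∨ KBoxRule ps c ∨ KDiaRule ps c ∨ axRule Ax ps c

/-- The sequent calculus `CK_□+Ax = LJ + K_□ + Ax`. -/
def CKBoxSys (Ax : Fml α → Prop) : RuleSet α := fun ps c =>
  LJRule ps c ∨ KBoxRule ps c ∨ axRule Ax ps c

/-- The sequent calculus `BLL+Ax = LJ + ◇L + Ax`. -/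
def BLLSys (Ax : Fml α → Prop) : RuleSet α := fun ps c =>
  LJRule ps c ∨ DiaLRule ps c ∨ axRule Ax ps c

/-- Provability of a sequent in the calculus generated by a rule set. -/
inductive Derives (R : RuleSet α) : Multiset (Fml α) → Option (Fml α) → Prop where
  | step {ps : List (Seq α)} {c : Seq α} (hr : R ps c)
      (hp : ∀ p ∈ ps, Derives R p.1 p.2) : Derives R c.1 c.2

/-- Basic formulas: generated from atoms, `⊤`, `⊥` by `∧`, `∨`, `◇`. -/
inductive Basic : Fml α → Prop where
  | atom (a : α) : Basic (.atom a)
  | top : Basic (.top : Fml α)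
  | bot : Basic (.bot : Fml α)
  | and {A B : Fml α} : Basic A → Basic B → Basic (.and A B)
  | or {A B : Fml α} : Basic A → Basic B → Basic (.or A B)
  | dia {A : Fml α} : Basic A → Basic (.dia A)

/-- Almost positive formulas: generated from basic formulas by `∧`, `∨`, `□`, `◇`
and implications `A → B` with `A` basic and `B` almost positive. -/
inductive AlmostPos : Fml α → Prop where
  | basic {A : Fml α} : Basic A → AlmostPos A
  | and {A B : Fml α} : AlmostPos A → AlmostPos B → AlmostPos (.and A B)
  | or {A B : Fml α} : AlmostPos A → AlmostPos B → AlmostPos (.or A B)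
  | box {A : Fml α} : AlmostPos A → AlmostPos (.box A)
  | dia {A : Fml α} : AlmostPos A → AlmostPos (.dia A)
  | imp {A B : Fml α} : Basic A → AlmostPos B → AlmostPos (.imp A B)

/-- Constructive formulas: generated from basic formulas by `∧`, `□` and
implications `A → B` with `A` almost positive and `B` constructive. -/
inductive Constructive : Fml α → Prop where
  | basic {A : Fml α} : Basic A → Constructive A
  | and {A B : Fml α} : Constructive A → Constructive B → Constructive (.and A B)
  | box {A : Fml α} : Constructive A → Constructive (.box A)
  | imp {A B : Fml α} : AlmostPos A → Constructive B → Constructive (.imp A B)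

/-- Harrop formulas: atoms, `⊥`, `⊤`, closed under `∧`, `□`, and implications
`A → B` with `A` arbitrary and `B` Harrop. -/
inductive Harrop : Fml α → Prop where
  | atom (a : α) : Harrop (.atom a)
  | top : Harrop (.top : Fml α)
  | bot : Harrop (.bot : Fml α)
  | and {A B : Fml α} : Harrop A → Harrop B → Harrop (.and A B)
  | box {A : Fml α} : Harrop A → Harrop (.box A)
  | imp (A : Fml α) {B : Fml α} : Harrop B → Harrop (.imp A B)

/-- Conjunction of a list of formulas (`⋀∅ = ⊤`). -/
def conj : List (Fml α) → Fml α
  | [] => .top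
  | [A] => A
  | A :: B :: l => .and A (conj (B :: l))

/-- Disjunction of a list of formulas (`⋁∅ = ⊥`). -/
def disj : List (Fml α) → Fml α
  | [] => .bot
  | [A] => A
  | A :: B :: l => .or A (disj (B :: l))

/-- Disjunction of a succedent (at most one formula; `⋁∅ = ⊥`). -/
def odisj : Option (Fml α) → Fml α
  | none => .bot
  | some A => A

/-- The multiset `{A_i → B_i}_{i ∈ I}` of implications of an indexed family. -/
def imps (AB : List (Fml α × Fml α)) : Multiset (Fml α) :=
  ↑(AB.map fun p => Fml.imp p.1 p.2)

/-- The conjunction `⋀_{i∈I} (A_i → B_i)` of an indexed family of implications. -/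
def impConj (AB : List (Fml α × Fml α)) : Fml α :=
  conj (AB.map fun p => Fml.imp p.1 p.2)

/-- Truth in the one-node *irreflexive* frame `𝒦ᵢ` under a Boolean valuation:
`□A` is always true and `◇A` is always false; the propositional connectives
are evaluated classically. -/
def evalI (v : α → Bool) : Fml α → Bool
  | .atom a  => v a
  | .top     => true
  | .bot     => false
  | .and A B => evalI v A && evalI v B
  | .or A B  => evalI v A || evalI v B
  | .imp A B => !evalI v A || evalI v B
  | .box _   => true
  | .dia _   => false

/-- Truth in the one-node *reflexive* frame `𝒦ᵣ` under a Boolean valuation: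
`□A` and `◇A` take the value of `A`. -/
def evalR (v : α → Bool) : Fml α → Bool
  | .atom a  => v a
  | .top     => true
  | .bot     => false
  | .and A B => evalR v A && evalR v B
  | .or A B  => evalR v A || evalR v B
  | .imp A B => !evalR v A || evalR v B
  | .box A   => evalR v A
  | .dia A   => evalR v A

/-- Validity of a sequent with respect to a one-node semantics: under every
valuation, if all formulas of the antecedent are true then so is the succedent. -/
def SeqValid (ev : (α → Bool) → Fml α → Bool) (Γ : Multiset (Fml α)) (Δ : Option (Fml α)) :
    Prop :=
  ∀ v : α → Bool, (∀ A ∈ Γ, ev v A = true) → ∃ B ∈ Δ, ev v B = true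

/-- `CK+Ax` is T-free: every provable sequent is valid in the irreflexive node frame. -/
def TFree (Ax : Fml α → Prop) : Prop :=
  ∀ (Γ : Multiset (Fml α)) (Δ : Option (Fml α)), Derives (CKSys Ax) Γ Δ → SeqValid evalI Γ Δ

/-- `CK+Ax` is T-full: every provable sequent is valid in the reflexive node
frame and the calculus proves `⇒ □p → p` and `⇒ p → ◇p`. -/
def TFull (Ax : Fml α → Prop) : Prop :=
  (∀ (Γ : Multiset (Fml α)) (Δ : Option (Fml α)), Derives (CKSys Ax) Γ Δ → SeqValid evalR Γ Δ) ∧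
  (∀ a : α, Derives (CKSys Ax) 0 (some (.imp (.box (.atom a)) (.atom a)))) ∧
  (∀ a : α, Derives (CKSys Ax) 0 (some (.imp (.atom a) (.dia (.atom a)))))

/-- Classical validity of a (modality-free) sequent: `⋀Γ → ⋁Δ` is true under
every Boolean valuation of the atoms. -/
def ClValid (Γ : Multiset (Fml α)) (Δ : Option (Fml α)) : Prop :=
  ∀ v : α → Bool, (∀ A ∈ Γ, evalI v A = true) → ∃ B ∈ Δ, evalI v B = true

/-- Nonempty conjunctions of atoms. -/
inductive AtomConj : Fml α → Prop where
  | single (a : α) : AtomConj (.atom a)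
  | and {A B : Fml α} : AtomConj A → AtomConj B → AtomConj (.and A B)

/-- Implicational Horn formulas: `⊥`, atoms, and implications `⋀Q → r` with `Q`
a nonempty multiset of atoms and `r` an atom or `⊥`. -/
inductive ImpHorn : Fml α → Prop where
  | bot : ImpHorn (.bot : Fml α)
  | atom (a : α) : ImpHorn (.atom a)
  | impAtom {A : Fml α} (hA : AtomConj A) (a : α) : ImpHorn (.imp A (.atom a))
  | impBot {A : Fml α} (hA : AtomConj A) : ImpHorn (.imp A .bot)

/-- Formulas of the form `◇^n p` with `p` an atom and `n ≥ 0`. -/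
inductive DiaPowAtom : Fml α → Prop where
  | atom (a : α) : DiaPowAtom (.atom a)
  | dia {A : Fml α} : DiaPowAtom A → DiaPowAtom (.dia A)

/-- Nonempty conjunctions `⋀_{i=1}^k ◇^{n_i} p_i` of formulas `◇^{n_i} p_i`. -/
inductive DiaConj : Fml α → Prop where
  | single {A : Fml α} : DiaPowAtom A → DiaConj A
  | and {A B : Fml α} : DiaConj A → DiaConj B → DiaConj (.and A B)

/-- Modal Horn formulas: `⊥` and atoms, closed under `□` and under implications
`A → B` with `A = ⋀_{i=1}^k ◇^{n_i} p_i` and `B` modal Horn. -/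
inductive ModalHorn : Fml α → Prop where
  | bot : ModalHorn (.bot : Fml α)
  | atom (a : α) : ModalHorn (.atom a)
  | box {A : Fml α} : ModalHorn A → ModalHorn (.box A)
  | imp {A B : Fml α} : DiaConj A → ModalHorn B → ModalHorn (.imp A B)

/-- The predicate "all atoms of the formula satisfy `P`". -/
def Fml.AtomsIn (P : α → Prop) : Fml α → Prop
  | .atom a  => P a
  | .top     => True
  | .bot     => True
  | .and A B => A.AtomsIn P ∧ B.AtomsIn P
  | .or A B  => A.AtomsIn P ∧ B.AtomsIn P
  | .imp A B => A.AtomsIn P ∧ B.AtomsIn P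
  | .box A   => A.AtomsIn P
  | .dia A   => A.AtomsIn P

/-- No `◇` occurs in the formula. -/
def Fml.DiaFree : Fml α → Prop
  | .atom _  => True
  | .top     => True
  | .bot     => True
  | .and A B => A.DiaFree ∧ B.DiaFree
  | .or A B  => A.DiaFree ∧ B.DiaFree
  | .imp A B => A.DiaFree ∧ B.DiaFree
  | .box A   => A.DiaFree
  | .dia _   => False

/-- No `□` occurs in the formula. -/
def Fml.BoxFree : Fml α → Prop
  | .atom _  => True
  | .top     => True
  | .bot     => True
  | .and A B => A.BoxFree ∧ B.BoxFree
  | .or A B  => A.BoxFree ∧ B.BoxFree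
  | .imp A B => A.BoxFree ∧ B.BoxFree
  | .box _   => False
  | .dia A   => A.BoxFree

/-- The formula is modality-free (propositional). -/
def Fml.ModFree : Fml α → Prop
  | .atom _  => True
  | .top     => True
  | .bot     => True
  | .and A B => A.ModFree ∧ B.ModFree
  | .or A B  => A.ModFree ∧ B.ModFree
  | .imp A B => A.ModFree ∧ B.ModFree
  | .box _   => False
  | .dia _   => False

/-- An angling of the language: an injection `φ ↦ ⟨φ⟩` from formulas into the
atoms whose image (the angled atoms) is disjoint from a fixed infinite set of
plain atoms. -/
structure Angling (α : Type) where
  angle : Fml α → α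
  plain : Set α
  inj : Function.Injective angle
  plain_infinite : plain.Infinite
  disjoint : ∀ φ : Fml α, angle φ ∉ plain

/-- `a` is an angled atom. -/
def Angling.Angled (S : Angling α) (a : α) : Prop := ∃ φ : Fml α, S.angle φ = a

/-- The translation `t`: `⊥^t = ⊥`, `p^t = ⟨p⟩`, `⊤^t = ⟨⊤⟩`,
`(A ∘ B)^t = (A^t ∘ B^t) ∧ ⟨A ∘ B⟩` and `(○A)^t = (○A^t) ∧ ⟨○A⟩`. -/
def Angling.tr (S : Angling α) : Fml α → Fml α
  | .atom a  => .atom (S.angle (.atom a))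
  | .top     => .atom (S.angle .top)
  | .bot     => .bot
  | .and A B => .and (.and (S.tr A) (S.tr B)) (.atom (S.angle (.and A B)))
  | .or A B  => .and (.or (S.tr A) (S.tr B)) (.atom (S.angle (.or A B)))
  | .imp A B => .and (.imp (S.tr A) (S.tr B)) (.atom (S.angle (.imp A B)))
  | .box A   => .and (.box (S.tr A)) (.atom (S.angle (.box A)))
  | .dia A   => .and (.dia (S.tr A)) (.atom (S.angle (.dia A)))

/-- Action of the standard substitution on atoms: an angled atom `⟨φ⟩` is sent
to `φ`; plain atoms are fixed. -/
noncomputable def Angling.stdAtom (S : Angling α) (a : α) : Fml α :=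
  haveI := Classical.propDecidable (∃ φ : Fml α, S.angle φ = a)
  if h : ∃ φ : Fml α, S.angle φ = a then h.choose else .atom a

/-- The standard substitution `s`: replaces each angled atom `⟨φ⟩` by `φ`,
fixes the plain atoms, and commutes with all connectives. -/
noncomputable def Angling.std (S : Angling α) : Fml α → Fml α :=
  Fml.subst S.stdAtom

/-- The Visser–Harrop property of a calculus. -/
def VisserHarrop (R : RuleSet α) : Prop :=
  ∀ (Γ : Multiset (Fml α)), (∀ A ∈ Γ, Harrop A) →
  ∀ (AB : List (Fml α × Fml α)) (C D : Fml α),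
    Derives R (Γ + imps AB) (some (.or C D)) →
    Derives R (Γ + imps AB) (some C) ∨
    Derives R (Γ + imps AB) (some D) ∨
    ∃ p ∈ AB, Derives R (Γ + imps AB) (some p.1)

/-- The disjunction property of a calculus. -/
def DisjProp (R : RuleSet α) : Prop :=
  ∀ C D : Fml α, Derives R 0 (some (.or C D)) →
    Derives R 0 (some C) ∨ Derives R 0 (some D)

/-- The formula interpretation `I(Γ ⇒ Δ) = ⋀Γ → ⋁Δ` belongs to `L` (stated for
every enumeration of the antecedent multiset as a list). -/
def interpIn (L : Set (Fml α)) (s : Seq α) : Prop :=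
  ∀ l : List (Fml α), (↑l : Multiset (Fml α)) = s.1 → Fml.imp (conj l) (odisj s.2) ∈ L

/- Named modal axioms (with `p := atom 0`, `q := atom 1`). -/
def axTa : Fml ℕ := .imp (.box (.atom 0)) (.atom 0)
def axTb : Fml ℕ := .imp (.atom 0) (.dia (.atom 0))
def axBa : Fml ℕ := .imp (.dia (.box (.atom 0))) (.atom 0)
def axBb : Fml ℕ := .imp (.atom 0) (.box (.dia (.atom 0)))
def ax4a : Fml ℕ := .imp (.box (.atom 0)) (.box (.box (.atom 0)))
def ax4b : Fml ℕ := .imp (.dia (.dia (.atom 0))) (.dia (.atom 0))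
def ax5a : Fml ℕ := .imp (.dia (.box (.atom 0))) (.box (.atom 0))
def ax5b : Fml ℕ := .imp (.dia (.atom 0)) (.box (.dia (.atom 0)))
def axDiaBot : Fml ℕ := .imp (.dia .bot) .bot
def axDiaOr : Fml ℕ :=
  .imp (.dia (.or (.atom 0) (.atom 1))) (.or (.dia (.atom 0)) (.dia (.atom 1)))
def axBoxImp : Fml ℕ :=
  .imp (.imp (.dia (.atom 0)) (.box (.atom 1))) (.box (.imp (.atom 0) (.atom 1)))

/-- The axioms of `X ⊆ {T, B, 4, 5}` in both their `a`- and `b`-versions. -/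
def XAxioms (tT tB t4 t5 : Bool) : Set (Fml ℕ) :=
  (if tT then ({axTa, axTb} : Set (Fml ℕ)) else ∅) ∪
  (if tB then ({axBa, axBb} : Set (Fml ℕ)) else ∅) ∪
  (if t4 then ({ax4a, ax4b} : Set (Fml ℕ)) else ∅) ∪
  (if t5 then ({ax5a, ax5b} : Set (Fml ℕ)) else ∅)

/-- The additional axioms of `IK` over `CK`. -/
def IKExtra : Set (Fml ℕ) := {axDiaBot, axDiaOr, axBoxImp}

/-- The right rule with premises `{Γ, φ̄_i ⇒ ψ̄_i}_{i∈I}` and conclusion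
`Γ, θ̄ ⇒ η̄`, closed under all substitutions of formulas for atoms and
multisets for the context `Γ`. -/
def rightRuleInst (prems : List (List (Fml α) × Option (Fml α)))
    (θ : List (Fml α)) (η : Option (Fml α)) : RuleSet α := fun ps c =>
  ∃ (σ : α → Fml α) (Γ : Multiset (Fml α)),
    ps = prems.map (fun pr =>
        ((Γ + ↑(pr.1.map (Fml.subst σ)) : Multiset (Fml α)), pr.2.map (Fml.subst σ))) ∧
    c = ((Γ + ↑(θ.map (Fml.subst σ)) : Multiset (Fml α)), η.map (Fml.subst σ))

/-- The left rule with premises `{Γ, φ̄_i ⇒ ψ̄_i}_{i∈I} ∪ {Γ, θ̄_j ⇒ Δ}_{j∈J}`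
and conclusion `Γ, η̄ ⇒ Δ`, closed under all substitutions of formulas for
atoms and multisets for `Γ` and `Δ`. -/
def leftRuleInst (prems : List (List (Fml α) × Option (Fml α)))
    (lefts : List (List (Fml α))) (η : List (Fml α)) : RuleSet α := fun ps c =>
  ∃ (σ : α → Fml α) (Γ : Multiset (Fml α)) (Δ : Option (Fml α)),
    ps = prems.map (fun pr =>
          ((Γ + ↑(pr.1.map (Fml.subst σ)) : Multiset (Fml α)), pr.2.map (Fml.subst σ)))
        ++ lefts.map (fun θj => ((Γ + ↑(θj.map (Fml.subst σ)) : Multiset (Fml α)), Δ)) ∧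
    c = ((Γ + ↑(η.map (Fml.subst σ)) : Multiset (Fml α)), Δ)

/-- The formula `Ax_R` of a right rule. -/
def AxRight (prems : List (List (Fml α) × Option (Fml α)))
    (θ : List (Fml α)) (η : Option (Fml α)) : Fml α :=
  .imp (.and (conj (prems.map fun pr => .imp (conj pr.1) (odisj pr.2))) (conj θ)) (odisj η)

/-- The formula `Ax_R` of a left rule. -/
def AxLeft (prems : List (List (Fml α) × Option (Fml α)))
    (lefts : List (List (Fml α))) (η : List (Fml α)) : Fml α :=
  .imp (.and (conj (prems.map fun pr => .imp (conj pr.1) (odisj pr.2))) (conj η))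
    (disj (lefts.map conj))

/-- The forgetful translation `f_i`: fixes atoms, `⊤`, `⊥`, commutes with
`∧`, `∨`, `→`, `□`, and sends every `◇A` to `⊥`. -/
def fi : Fml α → Fml α
  | .atom a  => .atom a
  | .top     => .top
  | .bot     => .bot
  | .and A B => .and (fi A) (fi B)
  | .or A B  => .or (fi A) (fi B)
  | .imp A B => .imp (fi A) (fi B)
  | .box A   => .box (fi A)
  | .dia _   => .bot

/-- The forgetful translation `f_r`: fixes atoms, `⊤`, `⊥`, commutes with
`∧`, `∨`, `→`, `□`, and sends `◇A` to `f_r A`. -/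
def fr : Fml α → Fml α
  | .atom a  => .atom a
  | .top     => .top
  | .bot     => .bot
  | .and A B => .and (fr A) (fr B)
  | .or A B  => .or (fr A) (fr B)
  | .imp A B => .imp (fr A) (fr B)
  | .box A   => .box (fr A)
  | .dia A   => fr A

/-! ### Auxiliary development for Statement 17 -/

section Aux17

lemma subst_subst (σ : α → Fml α) (τ : β → Fml α) (A : Fml β) :
    (A.subst τ).subst σ = A.subst (fun b => (τ b).subst σ) := by
  induction A <;> simp [Fml.subst, *]

lemma subst_atom (A : Fml α) : A.subst .atom = A := by
  induction A <;> simp [Fml.subst, *]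

/-- basic derivation helpers -/
lemma d0 {Rr : RuleSet α} {Γ : Multiset (Fml α)} {Δ : Option (Fml α)}
    (h : Rr [] (Γ, Δ)) : Derives Rr Γ Δ :=
  Derives.step h (by intro p hp; simp at hp)

lemma d1 {Rr : RuleSet α} {Γ₁ Γ : Multiset (Fml α)} {Δ₁ Δ : Option (Fml α)}
    (h : Rr [(Γ₁, Δ₁)] (Γ, Δ)) (h1 : Derives Rr Γ₁ Δ₁) : Derives Rr Γ Δ :=
  Derives.step h (by
    intro p hp
    simp only [List.mem_singleton] at hp
    subst hp; exact h1)

lemma d2 {Rr : RuleSet α} {Γ₁ Γ₂ Γ : Multiset (Fml α)} {Δ₁ Δ₂ Δ : Option (Fml α)}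
    (h : Rr [(Γ₁, Δ₁), (Γ₂, Δ₂)] (Γ, Δ)) (h1 : Derives Rr Γ₁ Δ₁)
    (h2 : Derives Rr Γ₂ Δ₂) : Derives Rr Γ Δ :=
  Derives.step h (by
    intro p hp
    simp only [List.mem_cons, List.mem_singleton, List.not_mem_nil, or_false] at hp
    rcases hp with hp | hp <;> (subst hp; assumption))

variable {CS : Finset (Fml ℕ)}

/-- the fixed calculus -/
local notation "RR" => CKBoxSys (fun A => A ∈ CS)

lemma weak {Γ : Multiset (Fml ℕ)} {Δ : Option (Fml ℕ)} (Θ : Multiset (Fml ℕ))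
    (h : Derives RR Γ Δ) : Derives RR (Θ + Γ) Δ := by
  induction Θ using Multiset.induction with
  | empty => simpa using h
  | cons A Θ ih =>
    rw [Multiset.cons_add]
    exact d1 (Or.inl (LJRule.wL A _ Δ)) ih

lemma cutAll {Δ : Option (Fml ℕ)} {T : Multiset (Fml ℕ)} :
    ∀ (Θ : Multiset (Fml ℕ)), (∀ X ∈ Θ, Derives RR T (some X)) →
      Derives RR (Θ + T) Δ → Derives RR T Δ := by
  intro Θ
  induction Θ using Multiset.induction with
  | empty => intro _ h; simpa using h
  | cons A Θ ih =>
    intro hp h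
    rw [Multiset.cons_add] at h
    refine ih (fun X hX => hp X (Multiset.mem_cons_of_mem hX)) ?_
    exact d2 (Or.inl (LJRule.cut A (Θ + T) Δ))
      (weak Θ (hp A (Multiset.mem_cons_self A Θ))) h

lemma prOf {Θ T : Multiset (Fml ℕ)} {Δ : Option (Fml ℕ)}
    (h : Derives RR Θ Δ) (hp : ∀ X ∈ Θ, Derives RR T (some X)) :
    Derives RR T Δ := by
  refine cutAll Θ hp ?_
  rw [add_comm]; exact weak T h

lemma prMem {T : Multiset (Fml ℕ)} {X : Fml ℕ} (hX : X ∈ T) :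
    Derives RR T (some X) := by
  have h : Derives RR (X ::ₘ T.erase X) (some X) :=
    d0 (Or.inl (LJRule.id (T.erase X) X))
  rwa [Multiset.cons_erase hX] at h

lemma prTop {T : Multiset (Fml ℕ)} : Derives RR T (some .top) :=
  d0 (Or.inl (LJRule.topR T))

lemma prBot {T : Multiset (Fml ℕ)} (h : Derives RR T (some .bot)) (E : Fml ℕ) :
    Derives RR T (some E) :=
  d2 (Or.inl (LJRule.cut .bot T (some E))) h (d0 (Or.inl (LJRule.botL T (some E))))

lemma prAnd₁ {T : Multiset (Fml ℕ)} {A B : Fml ℕ} (h : Derives RR T (some (.and A B))) :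
    Derives RR T (some A) :=
  d2 (Or.inl (LJRule.cut (.and A B) T (some A))) h
    (d1 (Or.inl (LJRule.andL₁ A B T (some A))) (d0 (Or.inl (LJRule.id T A))))

lemma prAnd₂ {T : Multiset (Fml ℕ)} {A B : Fml ℕ} (h : Derives RR T (some (.and A B))) :
    Derives RR T (some B) :=
  d2 (Or.inl (LJRule.cut (.and A B) T (some B))) h
    (d1 (Or.inl (LJRule.andL₂ A B T (some B))) (d0 (Or.inl (LJRule.id T B))))

lemma prAndR {T : Multiset (Fml ℕ)} {A B : Fml ℕ} (hA : Derives RR T (some A))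
    (hB : Derives RR T (some B)) : Derives RR T (some (.and A B)) :=
  d2 (Or.inl (LJRule.andR A B T)) hA hB

lemma prOrR₁ {T : Multiset (Fml ℕ)} {A : Fml ℕ} (B : Fml ℕ) (hA : Derives RR T (some A)) :
    Derives RR T (some (.or A B)) :=
  d1 (Or.inl (LJRule.orR₁ A B T)) hA

lemma prOrR₂ {T : Multiset (Fml ℕ)} (A : Fml ℕ) {B : Fml ℕ} (hB : Derives RR T (some B)) :
    Derives RR T (some (.or A B)) :=
  d1 (Or.inl (LJRule.orR₂ A B T)) hB

lemma prImp {T : Multiset (Fml ℕ)} {A B : Fml ℕ} (h : Derives RR T (some (.imp A B)))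
    (hA : Derives RR T (some A)) : Derives RR T (some B) :=
  d2 (Or.inl (LJRule.cut (.imp A B) T (some B))) h
    (d2 (Or.inl (LJRule.impL A B T (some B))) hA (d0 (Or.inl (LJRule.id T B))))

/-- closure of the rules under substitution -/
lemma rule_subst (σ : ℕ → Fml ℕ) {ps : List (Seq ℕ)} {c : Seq ℕ} (h : RR ps c) :
    CKBoxSys (fun A => A ∈ CS)
      (ps.map fun p => (p.1.map (Fml.subst σ), p.2.map (Fml.subst σ)))
      (c.1.map (Fml.subst σ), c.2.map (Fml.subst σ)) := by
  rcases h with h | h | h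
  · left
    cases h <;>
      simp only [List.map_nil, List.map_cons, Multiset.map_cons, Option.map_some,
        Option.map_none, Fml.subst] <;>
      constructor
  · right; left
    cases h with
    | mk Γ A =>
      simp only [List.map_cons, List.map_nil, Option.map_some, Fml.subst]
      have : (Γ.map Fml.box).map (Fml.subst σ) = (Γ.map (Fml.subst σ)).map Fml.box := by
        rw [Multiset.map_map, Multiset.map_map]; rfl
      rw [this]
      exact KBoxRule.mk (Γ.map (Fml.subst σ)) (A.subst σ)
  · right; right
    obtain ⟨hps, A, τ, hA, hc⟩ := h
    subst hps; subst hc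
    exact ⟨rfl, A, fun b => (τ b).subst σ, hA, by simp [subst_subst]⟩

lemma derives_subst {Γ : Multiset (Fml ℕ)} {Δ : Option (Fml ℕ)} (σ : ℕ → Fml ℕ)
    (h : Derives RR Γ Δ) :
    Derives RR (Γ.map (Fml.subst σ)) (Δ.map (Fml.subst σ)) := by
  induction h with
  | @step ps c hr hp ih =>
    refine Derives.step (rule_subst σ hr) ?_
    intro p hp'
    rcases List.mem_map.mp hp' with ⟨q, hq, rfl⟩
    exact ih q hq

end Aux17

/-- One-node evaluation, irreflexive (`b = false`) or reflexive (`b = true`). -/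
def evb : Bool → (ℕ → Bool) → Fml ℕ → Bool
  | true => evalR
  | false => evalI

/-- The slash predicate (Aczel slash), parametrized by the frame flag `b` and
the provability predicate `Pr`. -/
def Sl (b : Bool) (Pr : Fml ℕ → Prop) : Fml ℕ → Prop
  | .atom _ => True
  | .top => True
  | .bot => True
  | .dia _ => True
  | .and A B => (Sl b Pr A ∧ Pr A) ∧ (Sl b Pr B ∧ Pr B)
  | .or A B => (Sl b Pr A ∧ Pr A) ∨ (Sl b Pr B ∧ Pr B)
  | .imp A B => (Sl b Pr A ∧ Pr A) → (Sl b Pr B ∧ Pr B)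
  | .box A => b = true → (Sl b Pr A ∧ Pr A)

section Slash

variable {CS : Finset (Fml ℕ)}

local notation "RR" => CKBoxSys (fun A => A ∈ CS)

variable {b : Bool} {T : Multiset (Fml ℕ)}

/-- `Q` relative to the context `T`. -/
abbrev Qs (CS : Finset (Fml ℕ)) (b : Bool) (T : Multiset (Fml ℕ)) (A : Fml ℕ) : Prop :=
  Sl b (fun X => Derives (CKBoxSys (fun C => C ∈ CS)) T (some X)) A ∧
    Derives (CKBoxSys (fun C => C ∈ CS)) T (some A)

lemma evb_and {v : ℕ → Bool} {A B : Fml ℕ} :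
    evb b v (.and A B) = (evb b v A && evb b v B) := by cases b <;> rfl

lemma evb_or {v : ℕ → Bool} {A B : Fml ℕ} :
    evb b v (.or A B) = (evb b v A || evb b v B) := by cases b <;> rfl

lemma evb_imp {v : ℕ → Bool} {A B : Fml ℕ} :
    evb b v (.imp A B) = (!evb b v A || evb b v B) := by cases b <;> rfl

lemma evb_top {v : ℕ → Bool} : evb b v (.top : Fml ℕ) = true := by cases b <;> rfl

lemma evb_bot {v : ℕ → Bool} : evb b v (.bot : Fml ℕ) = false := by cases b <;> rfl

lemma evb_atom {v : ℕ → Bool} {a : ℕ} : evb b v (.atom a) = v a := by cases b <;> rfl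

lemma evb_box_true {v : ℕ → Bool} {A : Fml ℕ} : evb true v (.box A) = evb true v A := rfl

lemma evb_box_false {v : ℕ → Bool} {A : Fml ℕ} : evb false v (.box A) = true := rfl

section Lemmas

variable {σ : ℕ → Fml ℕ} {v : ℕ → Bool}
variable (hv : ∀ a : ℕ, v a = true ↔ Qs CS b T (σ a))
variable (hCon : ¬ Derives (CKBoxSys (fun C => C ∈ CS)) T (some Fml.bot))
variable (hT' : b = true → ∀ B : Fml ℕ, Derives (CKBoxSys (fun C => C ∈ CS)) T (some (Fml.box B)) → Derives (CKBoxSys (fun C => C ∈ CS)) T (some B))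

include hv in
/-- Lemma B1: true basic formulas are slashed. -/
lemma basic_ev_q {A : Fml ℕ} (hA : Basic A) (hdf : A.DiaFree)
    (hev : evb b v A = true) : Qs CS b T (A.subst σ) := by
  induction hA with
  | atom a => exact (hv a).mp (by rwa [evb_atom] at hev)
  | top => exact ⟨trivial, prTop⟩
  | bot => rw [evb_bot] at hev; exact absurd hev (by simp)
  | @and A B hA hB ihA ihB =>
    rw [evb_and, Bool.and_eq_true] at hev
    obtain ⟨h1, h2⟩ := hdf
    have qA := ihA h1 hev.1
    have qB := ihB h2 hev.2
    exact ⟨⟨qA, qB⟩, prAndR qA.2 qB.2⟩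
  | @or A B hA hB ihA ihB =>
    rw [evb_or, Bool.or_eq_true] at hev
    obtain ⟨h1, h2⟩ := hdf
    rcases hev with hev | hev
    · have qA := ihA h1 hev
      exact ⟨Or.inl qA, prOrR₁ _ qA.2⟩
    · have qB := ihB h2 hev
      exact ⟨Or.inr qB, prOrR₂ _ qB.2⟩
  | @dia A hA ih => exact absurd hdf (by simp [Fml.DiaFree])

include hv hCon in
/-- Lemma B2: slashed basic formulas are true. -/
lemma basic_q_ev {A : Fml ℕ} (hA : Basic A) (hdf : A.DiaFree)
    (hq : Qs CS b T (A.subst σ)) : evb b v A = true := by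
  induction hA with
  | atom a => rw [evb_atom]; exact (hv a).mpr hq
  | top => exact evb_top
  | bot => exact absurd hq.2 hCon
  | @and A B hA hB ihA ihB =>
    obtain ⟨h1, h2⟩ := hdf
    obtain ⟨⟨qA, qB⟩, _⟩ := hq
    rw [evb_and, Bool.and_eq_true]
    exact ⟨ihA h1 qA, ihB h2 qB⟩
  | @or A B hA hB ihA ihB =>
    obtain ⟨h1, h2⟩ := hdf
    obtain ⟨hS, _⟩ := hq
    rw [evb_or, Bool.or_eq_true]
    rcases hS with hS | hS
    · exact Or.inl (ihA h1 hS)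
    · exact Or.inr (ihB h2 hS)
  | @dia A hA ih => exact absurd hdf (by simp [Fml.DiaFree])

include hv hCon in
/-- Lemma P: slashed almost positive formulas are true. -/
lemma almostPos_q_ev {A : Fml ℕ} (hA : AlmostPos A) (hdf : A.DiaFree)
    (hq : Qs CS b T (A.subst σ)) : evb b v A = true := by
  induction hA with
  | basic h => exact basic_q_ev hv hCon h hdf hq
  | @and A B hA hB ihA ihB =>
    obtain ⟨h1, h2⟩ := hdf
    obtain ⟨⟨qA, qB⟩, _⟩ := hq
    rw [evb_and, Bool.and_eq_true]
    exact ⟨ihA h1 qA, ihB h2 qB⟩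
  | @or A B hA hB ihA ihB =>
    obtain ⟨h1, h2⟩ := hdf
    obtain ⟨hS, _⟩ := hq
    rw [evb_or, Bool.or_eq_true]
    rcases hS with hS | hS
    · exact Or.inl (ihA h1 hS)
    · exact Or.inr (ihB h2 hS)
  | @box A hA ih =>
    cases b with
    | false => exact evb_box_false
    | true =>
      rw [evb_box_true]
      exact ih hdf (hq.1 rfl)
  | @dia A hA ih => exact absurd hdf (by simp [Fml.DiaFree])
  | @imp A B hA hB ih =>
    obtain ⟨h1, h2⟩ := hdf
    rw [evb_imp, Bool.or_eq_true, Bool.not_eq_true']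
    rcases hev : evb b v A with _ | _
    · exact Or.inl rfl
    · refine Or.inr (ih h2 (hq.1 (basic_ev_q hv hA h1 hev)))

include hv hCon hT' in
/-- Lemma C: true, provable constructive formulas are slashed. -/
lemma constructive_ev_sl {A : Fml ℕ} (hA : Constructive A) (hdf : A.DiaFree)
    (hev : evb b v A = true) (hpr : Derives RR T (some (A.subst σ))) :
    Sl b (fun X => Derives RR T (some X)) (A.subst σ) := by
  induction hA with
  | basic h => exact (basic_ev_q hv h hdf hev).1
  | @and A B hA hB ihA ihB =>
    obtain ⟨h1, h2⟩ := hdf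
    rw [evb_and, Bool.and_eq_true] at hev
    have pA : Derives RR T (some (A.subst σ)) := prAnd₁ hpr
    have pB : Derives RR T (some (B.subst σ)) := prAnd₂ hpr
    exact ⟨⟨ihA h1 hev.1 pA, pA⟩, ⟨ihB h2 hev.2 pB, pB⟩⟩
  | @box A hA ih =>
    intro hb
    subst hb
    rw [evb_box_true] at hev
    have pA : Derives RR T (some (A.subst σ)) := hT' rfl _ hpr
    exact ⟨ih hdf hev pA, pA⟩
  | @imp A B hA hB ih =>
    obtain ⟨h1, h2⟩ := hdf
    intro hQA
    have hevA : evb b v A = true := almostPos_q_ev hv hCon hA h1 hQA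
    rw [evb_imp, hevA, Bool.not_true, Bool.false_or] at hev
    have pB : Derives RR T (some (B.subst σ)) := prImp hpr hQA.2
    exact ⟨ih h2 hev pB, pB⟩

include hT' in
/-- Lemma H: provable Harrop formulas are slashed. -/
lemma harrop_sl {A : Fml ℕ} (hA : Harrop A) (hpr : Derives RR T (some A)) :
    Sl b (fun X => Derives RR T (some X)) A := by
  induction hA with
  | atom a => trivial
  | top => trivial
  | bot => trivial
  | @and A B hA hB ihA ihB =>
    exact ⟨⟨ihA (prAnd₁ hpr), prAnd₁ hpr⟩, ⟨ihB (prAnd₂ hpr), prAnd₂ hpr⟩⟩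
  | @box A hA ih =>
    intro hb
    have pA := hT' hb _ hpr
    exact ⟨ih pA, pA⟩
  | @imp A B hB ih =>
    intro hQA
    have pB := prImp hpr hQA.2
    exact ⟨ih pB, pB⟩

include hCon hT' in
/-- Main soundness of the slash: every derivable sequent all of whose
antecedent formulas are slashed has a slashed succedent. -/
lemma main_sound (hCS : ∀ A ∈ CS, Constructive A ∧ A.DiaFree)
    (hval : ∀ (Θ : Multiset (Fml ℕ)) (Δ : Option (Fml ℕ)),
      Derives RR Θ Δ → SeqValid (evb b) Θ Δ) :
    ∀ {Θ : Multiset (Fml ℕ)} {Δ : Option (Fml ℕ)}, Derives RR Θ Δ →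
      (∀ X ∈ Θ, Qs CS b T X) → ∀ E : Fml ℕ, Δ = some E →
      Sl b (fun X => Derives (CKBoxSys (fun C => C ∈ CS)) T (some X)) E := by
  intro Θ Δ h
  induction h with
  | @step ps c hr hp ih =>
    intro hQ E hE
    rcases hr with hr | hr | hr
    · cases hr with
      | id Γ A =>
        cases hE
        exact (hQ E (Multiset.mem_cons_self E Γ)).1
      | botL Γ Δ' =>
        exact absurd (hQ _ (Multiset.mem_cons_self _ _)).2 hCon
      | topR Γ => cases hE; trivial
      | wL A Γ Δ' =>
        exact ih (Γ, Δ') (by simp) (fun X hX => hQ X (Multiset.mem_cons_of_mem hX)) E hE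
      | wR A Γ =>
        have hN : Derives (CKBoxSys (fun C => C ∈ CS)) T none :=
          prOf (hp (Γ, none) (by simp)) (fun X hX => (hQ X hX).2)
        exact absurd (d1 (Or.inl (LJRule.wR Fml.bot T)) hN) hCon
      | cL A Γ Δ' =>
        refine ih (A ::ₘ A ::ₘ Γ, Δ') (by simp) ?_ E hE
        intro X hX
        rcases Multiset.mem_cons.mp hX with rfl | hX
        · exact hQ X (Multiset.mem_cons_self X Γ)
        · exact hQ X hX
      | cut A Γ Δ' =>
        have qA : Qs CS b T A :=
          ⟨ih (Γ, some A) (by simp) hQ A rfl,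
            prOf (hp (Γ, some A) (by simp)) (fun X hX => (hQ X hX).2)⟩
        refine ih (A ::ₘ Γ, Δ') (by simp) ?_ E hE
        intro X hX
        rcases Multiset.mem_cons.mp hX with rfl | hX
        · exact qA
        · exact hQ X hX
      | andL₁ A B Γ Δ' =>
        have qAB := hQ _ (Multiset.mem_cons_self _ _)
        refine ih (A ::ₘ Γ, Δ') (by simp) ?_ E hE
        intro X hX
        rcases Multiset.mem_cons.mp hX with rfl | hX
        · exact qAB.1.1
        · exact hQ X (Multiset.mem_cons_of_mem hX)
      | andL₂ A B Γ Δ' =>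
        have qAB := hQ _ (Multiset.mem_cons_self _ _)
        refine ih (B ::ₘ Γ, Δ') (by simp) ?_ E hE
        intro X hX
        rcases Multiset.mem_cons.mp hX with rfl | hX
        · exact qAB.1.2
        · exact hQ X (Multiset.mem_cons_of_mem hX)
      | andR A B Γ =>
        cases hE
        exact ⟨⟨ih (Γ, some A) (by simp) hQ A rfl,
            prOf (hp (Γ, some A) (by simp)) (fun X hX => (hQ X hX).2)⟩,
          ⟨ih (Γ, some B) (by simp) hQ B rfl,
            prOf (hp (Γ, some B) (by simp)) (fun X hX => (hQ X hX).2)⟩⟩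
      | orL A B Γ Δ' =>
        have qAB := hQ _ (Multiset.mem_cons_self _ _)
        have restQ : ∀ X ∈ Γ, Qs CS b T X :=
          fun X hX => hQ X (Multiset.mem_cons_of_mem hX)
        rcases qAB.1 with qA | qB
        · refine ih (A ::ₘ Γ, Δ') (by simp) ?_ E hE
          intro X hX
          rcases Multiset.mem_cons.mp hX with rfl | hX
          · exact qA
          · exact restQ X hX
        · refine ih (B ::ₘ Γ, Δ') (by simp) ?_ E hE
          intro X hX
          rcases Multiset.mem_cons.mp hX with rfl | hX
          · exact qB
          · exact restQ X hX
      | orR₁ A B Γ =>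
        cases hE
        exact Or.inl ⟨ih (Γ, some A) (by simp) hQ A rfl,
          prOf (hp (Γ, some A) (by simp)) (fun X hX => (hQ X hX).2)⟩
      | orR₂ A B Γ =>
        cases hE
        exact Or.inr ⟨ih (Γ, some B) (by simp) hQ B rfl,
          prOf (hp (Γ, some B) (by simp)) (fun X hX => (hQ X hX).2)⟩
      | impL A B Γ Δ' =>
        have qI := hQ _ (Multiset.mem_cons_self _ _)
        have restQ : ∀ X ∈ Γ, Qs CS b T X :=
          fun X hX => hQ X (Multiset.mem_cons_of_mem hX)
        have qA : Qs CS b T A :=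
          ⟨ih (Γ, some A) (by simp) restQ A rfl,
            prOf (hp (Γ, some A) (by simp)) (fun X hX => (restQ X hX).2)⟩
        have qB := qI.1 qA
        refine ih (B ::ₘ Γ, Δ') (by simp) ?_ E hE
        intro X hX
        rcases Multiset.mem_cons.mp hX with rfl | hX
        · exact qB
        · exact restQ X hX
      | impR A B Γ =>
        cases hE
        intro hQA
        have hQ' : ∀ X ∈ A ::ₘ Γ, Qs CS b T X := by
          intro X hX
          rcases Multiset.mem_cons.mp hX with rfl | hX
          · exact hQA
          · exact hQ X hX
        exact ⟨ih (A ::ₘ Γ, some B) (by simp) hQ' B rfl,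
          prOf (hp (A ::ₘ Γ, some B) (by simp)) (fun X hX => (hQ' X hX).2)⟩
    · cases hr with
      | mk Γ A =>
        cases hE
        intro hb
        have hQΓ : ∀ Y ∈ Γ, Qs CS b T Y := by
          intro Y hY
          exact (hQ _ (Multiset.mem_map_of_mem _ hY)).1 hb
        exact ⟨ih (Γ, some A) (by simp) hQΓ A rfl,
          prOf (hp (Γ, some A) (by simp)) (fun Y hY => (hQΓ Y hY).2)⟩
    · obtain ⟨hps, A, σ, hACS, hc⟩ := hr
      subst hc
      cases hE
      classical
      set v : ℕ → Bool := fun a => decide (Qs CS b T (σ a)) with hvdef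
      have hv : ∀ a : ℕ, v a = true ↔ Qs CS b T (σ a) := by
        intro a; simp [hvdef]
      have hpr : Derives (CKBoxSys (fun C => C ∈ CS)) T (some (A.subst σ)) := by
        have := weak (Γ := 0) (Δ := some (A.subst σ)) T
          (d0 (Or.inr (Or.inr ⟨rfl, A, σ, hACS, rfl⟩)))
        simpa using this
      have dA : Derives (CKBoxSys (fun C => C ∈ CS)) 0 (some A) :=
        d0 (Or.inr (Or.inr ⟨rfl, A, Fml.atom, hACS, by rw [subst_atom]⟩))
      have hevA : evb b v A = true := by
        obtain ⟨B, hB, he⟩ := hval 0 (some A) dA v (by simp)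
        simp only [Option.mem_def, Option.some.injEq] at hB
        subst hB
        exact he
      exact constructive_ev_sl hv hCon hT' (hCS A hACS).1 (hCS A hACS).2 hevA hpr

end Lemmas

end Slash

/-- any T-free or T-full calculus `CK_□+𝒞` with `𝒞` a finite set
of constructive ◇-free formulas has the Visser–Harrop property (over the
◇-free fragment). -/
theorem statement_17 (CS : Finset (Fml ℕ)) (hCS : ∀ A ∈ CS, Constructive A ∧ A.DiaFree)
    (hTF : (∀ (Γ : Multiset (Fml ℕ)) (Δ : Option (Fml ℕ)),
              Derives (CKBoxSys (· ∈ CS)) Γ Δ → SeqValid evalI Γ Δ) ∨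
           ((∀ (Γ : Multiset (Fml ℕ)) (Δ : Option (Fml ℕ)),
              Derives (CKBoxSys (· ∈ CS)) Γ Δ → SeqValid evalR Γ Δ) ∧
            (∀ n : ℕ, Derives (CKBoxSys (· ∈ CS)) 0
              (some (.imp (.box (.atom n)) (.atom n))))))
    (Γ : Multiset (Fml ℕ)) (hΓ : ∀ A ∈ Γ, Harrop A ∧ A.DiaFree)
    (AB : List (Fml ℕ × Fml ℕ)) (hAB : ∀ p ∈ AB, p.1.DiaFree ∧ p.2.DiaFree)
    (C D : Fml ℕ) (hC : C.DiaFree) (hD : D.DiaFree)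
    (h : Derives (CKBoxSys (· ∈ CS)) (Γ + imps AB) (some (.or C D))) :
    Derives (CKBoxSys (· ∈ CS)) (Γ + imps AB) (some C) ∨
    Derives (CKBoxSys (· ∈ CS)) (Γ + imps AB) (some D) ∨
    ∃ p ∈ AB, Derives (CKBoxSys (· ∈ CS)) (Γ + imps AB) (some p.1) := by
  classical
  set T : Multiset (Fml ℕ) := Γ + imps AB with hTdef
  by_cases hbot : Derives (CKBoxSys (fun C => C ∈ CS)) T (some Fml.bot)
  · exact Or.inl (prBot hbot C)
  by_cases hax : ∃ p ∈ AB, Derives (CKBoxSys (fun C => C ∈ CS)) T (some p.1)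
  · exact Or.inr (Or.inr hax)
  obtain ⟨b, hval, hT0⟩ :
      ∃ b : Bool,
        (∀ (Θ : Multiset (Fml ℕ)) (Δ : Option (Fml ℕ)),
          Derives (CKBoxSys (fun C => C ∈ CS)) Θ Δ → SeqValid (evb b) Θ Δ) ∧
        (b = true → ∀ n : ℕ, Derives (CKBoxSys (fun C => C ∈ CS)) 0
          (some (.imp (.box (.atom n)) (.atom n)))) := by
    rcases hTF with h | ⟨h, h2⟩
    · exact ⟨false, h, by simp⟩
    · exact ⟨true, h, fun _ => h2⟩
  have hT' : b = true → ∀ B : Fml ℕ,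
      Derives (CKBoxSys (fun C => C ∈ CS)) T (some (Fml.box B)) →
      Derives (CKBoxSys (fun C => C ∈ CS)) T (some B) := by
    intro hb B hB
    have h0 := hT0 hb 0
    have h1 := derives_subst (fun _ => B) h0
    simp only [Multiset.map_zero, Option.map_some, Fml.subst] at h1
    have h2 : Derives (CKBoxSys (fun C => C ∈ CS)) T (some (.imp (.box B) B)) := by
      have := weak (Γ := 0) T h1
      simpa using this
    exact prImp h2 hB
  have hbase : ∀ X ∈ T, Qs CS b T X := by
    intro X hX
    have pr : Derives (CKBoxSys (fun C => C ∈ CS)) T (some X) := prMem hX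
    rcases Multiset.mem_add.mp hX with hX' | hX'
    · exact ⟨harrop_sl hT' (hΓ X hX').1 pr, pr⟩
    · rw [imps, Multiset.mem_coe, List.mem_map] at hX'
      obtain ⟨p, hp, rfl⟩ := hX'
      refine ⟨?_, pr⟩
      intro hQA
      exact (hax ⟨p, hp, hQA.2⟩).elim
  have hsl := main_sound hbot hT' hCS hval h hbase (C.or D) rfl
  rcases hsl with hC' | hD'
  · exact Or.inl hC'.2
  · exact Or.inr (Or.inl hD'.2)

end UPT
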